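/- (Sufficient decrease, inequality (10) in Theorem 1) Let ω ∈ (0,2), θ ≥ 0 and δ = 2θ/ω + ((2−ω)/ω)·minᵢ Dᵢᵢ. If z is a triangle-proximal point of x, then f(z) − f(x) ≤ −(δ/2)·‖z − x‖². -/

import Mathlib

open scoped RealInnerProductSpace
open Matrix Filter

noncomputable section

/-- Euclidean space ℝⁿ. -/
abbrev E (n : ℕ) := EuclideanSpace ℝ (Fin n)

/-- Matrix-vector multiplication, valued in Euclidean space. -/
def mulVecE {n : ℕ} (M : Matrix (Fin n) (Fin n) ℝ) (x : E n) : E n :=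
  (WithLp.equiv 2 (Fin n → ℝ)).symm (M.mulVec ((WithLp.equiv 2 (Fin n → ℝ)) x))

/-- Operator (spectral) norm of a matrix. -/
def opNorm {n : ℕ} (M : Matrix (Fin n) (Fin n) ℝ) : ℝ :=
  ‖Matrix.toEuclideanCLM (𝕜 := ℝ) M‖

/-- The diagonal part `D` of `A`. -/
def Dmat {n : ℕ} (A : Matrix (Fin n) (Fin n) ℝ) : Matrix (Fin n) (Fin n) ℝ :=
  Matrix.diagonal fun i => A i i

/-- The strictly lower triangular part `L` of `A`. -/
def Lmat {n : ℕ} (A : Matrix (Fin n) (Fin n) ℝ) : Matrix (Fin n) (Fin n) ℝ :=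
  Matrix.of fun i j => if (j : ℕ) < (i : ℕ) then A i j else 0

/-- `B = L + (1/ω)(D + θI)`. -/
def Bmat {n : ℕ} (ω θ : ℝ) (A : Matrix (Fin n) (Fin n) ℝ) : Matrix (Fin n) (Fin n) ℝ :=
  Lmat A + ω⁻¹ • (Dmat A + θ • (1 : Matrix (Fin n) (Fin n) ℝ))

/-- `C = Lᵀ + (1/ω)((ω−1)D − θI)`. -/
def Cmat {n : ℕ} (ω θ : ℝ) (A : Matrix (Fin n) (Fin n) ℝ) : Matrix (Fin n) (Fin n) ℝ :=
  (Lmat A)ᵀ + ω⁻¹ • ((ω - 1) • Dmat A - θ • (1 : Matrix (Fin n) (Fin n) ℝ))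

/-- `v` is a subgradient of `h` at `z`. -/
def IsSubgradient {n : ℕ} (h : E n → ℝ) (v z : E n) : Prop :=
  ∀ y, h z + ⟪v, y - z⟫ ≤ h y

/-- The composite objective `f(x) = (1/2)⟨x, Ax⟩ + ⟨b, x⟩ + h(x)`. -/
def fObj {n : ℕ} (A : Matrix (Fin n) (Fin n) ℝ) (b : E n) (h : E n → ℝ) (x : E n) : ℝ :=
  (1/2) * ⟪x, mulVecE A x⟫ + ⟪b, x⟫ + h x

/-- `z` is a triangle-proximal point of `x`: there is a subgradient `v` of `h` at `z`
with `Bz + b + Cx + v = 0`. -/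
def IsTriangleProx {n : ℕ} (ω θ : ℝ) (A : Matrix (Fin n) (Fin n) ℝ) (b : E n)
    (h : E n → ℝ) (x z : E n) : Prop :=
  ∃ v, IsSubgradient h v z ∧
    mulVecE (Bmat ω θ A) z + b + mulVecE (Cmat ω θ A) x + v = 0
lemma dot_symm_mul {n : ℕ} (M : Matrix (Fin n) (Fin n) ℝ) (hM : M.IsSymm) (u v : Fin n → ℝ) :
    u ⬝ᵥ M.mulVec v = v ⬝ᵥ M.mulVec u := by
  rw [Matrix.dotProduct_mulVec, ← Matrix.mulVec_transpose, hM.eq, dotProduct_comm]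

lemma BC_add {n : ℕ} (ω θ : ℝ) (hω : ω ≠ 0) (A : Matrix (Fin n) (Fin n) ℝ) (hA : A.IsSymm) :
    Bmat ω θ A + Cmat ω θ A = A := by
  ext i j
  simp only [Bmat, Cmat, Lmat, Dmat, Matrix.add_apply, Matrix.smul_apply, Matrix.sub_apply,
    Matrix.transpose_apply, Matrix.diagonal_apply, Matrix.one_apply, Matrix.of_apply, smul_eq_mul]
  rcases lt_trichotomy (j : ℕ) (i : ℕ) with hlt | heq | hgt
  · have hne : i ≠ j := fun h => by simp [h] at hlt
    simp [hlt, hlt.asymm, hne, Ne.symm hne]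
  · have hij : i = j := Fin.ext heq.symm
    subst hij
    simp only [lt_irrefl, if_false, if_pos rfl, if_true]
    field_simp
    ring
  · have hne : i ≠ j := fun h => by simp [h] at hgt
    have := hA.apply i j
    simp [hgt, hgt.asymm, hne, Ne.symm hne, this]

lemma skew_dot {n : ℕ} (M : Matrix (Fin n) (Fin n) ℝ) (d : Fin n → ℝ) :
    d ⬝ᵥ Mᵀ.mulVec d = d ⬝ᵥ M.mulVec d := by
  rw [Matrix.dotProduct_mulVec, ← Matrix.mulVec_transpose, Matrix.transpose_transpose,
    dotProduct_comm]

lemma innerE {n : ℕ} (u w : E n) : ⟪u, w⟫ = (fun i => u i) ⬝ᵥ (fun i => w i) := by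
  simp [PiLp.inner_apply, dotProduct, mul_comm]

lemma inner_mulVecE {n : ℕ} (M : Matrix (Fin n) (Fin n) ℝ) (u w : E n) :
    ⟪u, mulVecE M w⟫ = (fun i => u i) ⬝ᵥ M.mulVec (fun i => w i) := by
  simp [PiLp.inner_apply, dotProduct, mulVecE, Matrix.mulVec, dotProduct, mul_comm]

set_option maxHeartbeats 1600000 in
/-- sufficient decrease, inequality (10) in Theorem 1. -/
theorem triangle_prox_sufficient_decrease {n : ℕ} (hn : 0 < n)
    (A : Matrix (Fin n) (Fin n) ℝ) (hA : A.IsSymm) (b : E n) (h : E n → ℝ)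
    (ω θ : ℝ) (hω : ω ∈ Set.Ioo (0 : ℝ) 2) (hθ : 0 ≤ θ)
    (δ : ℝ) (hδ : δ = 2 * θ / ω + (2 - ω) / ω * ⨅ i, A i i)
    (x z : E n) (hz : IsTriangleProx ω θ A b h x z) :
    fObj A b h z - fObj A b h x ≤ -(δ / 2) * ‖z - x‖ ^ 2 := by
  obtain ⟨hω0, hω2⟩ := hω
  have hωne : ω ≠ 0 := ne_of_gt hω0
  obtain ⟨v, hsub, heq⟩ := hz
  -- conversion facts at the level of plain functions
  have hfz : fObj A b h z
      = (1/2) * ((fun i => z i) ⬝ᵥ A.mulVec (fun i => z i))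
        + ((fun i => b i) ⬝ᵥ (fun i => z i)) + h z := by
    rw [fObj, innerE b z, inner_mulVecE A z z]
  have hfx : fObj A b h x
      = (1/2) * ((fun i => x i) ⬝ᵥ A.mulVec (fun i => x i))
        + ((fun i => b i) ⬝ᵥ (fun i => x i)) + h x := by
    rw [fObj, innerE b x, inner_mulVecE A x x]
  have hnorm : ‖z - x‖ ^ 2
      = ((fun i => z i) - (fun i => x i)) ⬝ᵥ ((fun i => z i) - (fun i => x i)) := by
    rw [← real_inner_self_eq_norm_sq, innerE]; rfl
  have hv : (fun i => v i)
      = -((Bmat ω θ A).mulVec (fun i => z i) + (fun i => b i)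
          + (Cmat ω θ A).mulVec (fun i => x i)) := by
    funext i
    have h2 : mulVecE (Bmat ω θ A) z i + b i + mulVecE (Cmat ω θ A) x i + v i = 0 :=
      congrArg (fun w : E n => w i) heq
    have h3 : mulVecE (Bmat ω θ A) z i = (Bmat ω θ A).mulVec (fun j => z j) i := rfl
    have h4 : mulVecE (Cmat ω θ A) x i = (Cmat ω θ A).mulVec (fun j => x j) i := rfl
    rw [h3, h4] at h2
    simp only [Pi.neg_apply, Pi.add_apply]
    linarith [h2]
  have hsub2 : h z - h x
      ≤ (fun i => v i) ⬝ᵥ ((fun i => z i) - (fun i => x i)) := by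
    have h1 := hsub x
    have h2 : ⟪v, x - z⟫ = -((fun i => v i) ⬝ᵥ ((fun i => z i) - (fun i => x i))) := by
      rw [innerE]
      simp only [dotProduct, Pi.sub_apply, ← Finset.sum_neg_distrib]
      refine Finset.sum_congr rfl fun i _ => ?_
      show v i * (x - z) i = -(v i * (z i - x i))
      have : (x - z) i = x i - z i := rfl
      rw [this]; ring
    rw [h2] at h1
    linarith
  -- now abstract to plain vectors
  set zf : Fin n → ℝ := fun i => z i with hzf
  set xf : Fin n → ℝ := fun i => x i with hxf
  set bf : Fin n → ℝ := fun i => b i with hbf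
  set vf : Fin n → ℝ := fun i => v i with hvf
  set df : Fin n → ℝ := zf - xf with hdfdef
  set B := Bmat ω θ A with hB
  set C := Cmat ω θ A with hC
  -- key algebraic identity
  have hBCA : B + C = A := BC_add ω θ hωne A hA
  have hsymA : xf ⬝ᵥ A.mulVec zf = zf ⬝ᵥ A.mulVec xf := dot_symm_mul A hA xf zf
  have eAz : zf ⬝ᵥ A.mulVec zf = zf ⬝ᵥ B.mulVec zf + zf ⬝ᵥ C.mulVec zf := by
    rw [← hBCA, Matrix.add_mulVec, dotProduct_add]
  have eAx : xf ⬝ᵥ A.mulVec xf = xf ⬝ᵥ B.mulVec xf + xf ⬝ᵥ C.mulVec xf := by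
    rw [← hBCA, Matrix.add_mulVec, dotProduct_add]
  have eAzx : zf ⬝ᵥ A.mulVec xf = zf ⬝ᵥ B.mulVec xf + zf ⬝ᵥ C.mulVec xf := by
    rw [← hBCA, Matrix.add_mulVec, dotProduct_add]
  have eAxz : xf ⬝ᵥ A.mulVec zf = xf ⬝ᵥ B.mulVec zf + xf ⬝ᵥ C.mulVec zf := by
    rw [← hBCA, Matrix.add_mulVec, dotProduct_add]
  have identity :
      (1/2) * (zf ⬝ᵥ A.mulVec zf) - (1/2) * (xf ⬝ᵥ A.mulVec xf)
        + bf ⬝ᵥ zf - bf ⬝ᵥ xf - (B.mulVec zf + bf + C.mulVec xf) ⬝ᵥ df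
      = (1/2) * (df ⬝ᵥ (C - B).mulVec df) := by
    have expand1 : (B.mulVec zf + bf + C.mulVec xf) ⬝ᵥ df
        = zf ⬝ᵥ B.mulVec zf - xf ⬝ᵥ B.mulVec zf + (bf ⬝ᵥ zf - bf ⬝ᵥ xf)
          + (zf ⬝ᵥ C.mulVec xf - xf ⬝ᵥ C.mulVec xf) := by
      simp only [hdfdef, add_dotProduct, dotProduct_sub]
      rw [dotProduct_comm (B.mulVec zf) zf, dotProduct_comm (B.mulVec zf) xf,
        dotProduct_comm (C.mulVec xf) zf, dotProduct_comm (C.mulVec xf) xf]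
      ring
    have expand2 : df ⬝ᵥ (C - B).mulVec df
        = zf ⬝ᵥ C.mulVec zf - zf ⬝ᵥ C.mulVec xf - xf ⬝ᵥ C.mulVec zf + xf ⬝ᵥ C.mulVec xf
          - (zf ⬝ᵥ B.mulVec zf - zf ⬝ᵥ B.mulVec xf - xf ⬝ᵥ B.mulVec zf + xf ⬝ᵥ B.mulVec xf) := by
      simp only [hdfdef, Matrix.sub_mulVec, Matrix.mulVec_sub, dotProduct_sub,
        sub_dotProduct]
      ring
    rw [expand1, expand2]
    linarith [eAz, eAx, eAzx, eAxz, hsymA]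
  -- the quadratic form bound
  set m : ℝ := ⨅ i, A i i with hm
  have hmle : ∀ i, m ≤ A i i := fun i =>
    ciInf_le (Set.Finite.bddBelow (Set.finite_range _)) i
  have hS : df ⬝ᵥ (Dmat A).mulVec df = ∑ i, A i i * df i ^ 2 := by
    simp only [Dmat, dotProduct, Matrix.mulVec_diagonal]
    exact Finset.sum_congr rfl fun i _ => by ring
  have hN : df ⬝ᵥ (1 : Matrix (Fin n) (Fin n) ℝ).mulVec df = df ⬝ᵥ df := by
    rw [Matrix.one_mulVec]
  have hskew : df ⬝ᵥ (Lmat A)ᵀ.mulVec df = df ⬝ᵥ (Lmat A).mulVec df := skew_dot _ df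
  have hNnn : 0 ≤ df ⬝ᵥ df :=
    Finset.sum_nonneg fun i _ => mul_self_nonneg _
  have hSm : m * (df ⬝ᵥ df) ≤ ∑ i, A i i * df i ^ 2 := by
    have e : m * (df ⬝ᵥ df) = ∑ i, m * df i ^ 2 := by
      simp only [dotProduct, Finset.mul_sum]
      exact Finset.sum_congr rfl fun i _ => by ring
    rw [e]
    exact Finset.sum_le_sum fun i _ => mul_le_mul_of_nonneg_right (hmle i) (sq_nonneg _)
  have quadbound : df ⬝ᵥ (C - B).mulVec df ≤ -δ * (df ⬝ᵥ df) := by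
    have hval : df ⬝ᵥ (C - B).mulVec df
        = ω⁻¹ * ((ω - 2) * (∑ i, A i i * df i ^ 2) - 2 * θ * (df ⬝ᵥ df)) := by
      simp only [hB, hC, Bmat, Cmat, Matrix.sub_mulVec, Matrix.add_mulVec,
        Matrix.smul_mulVec, dotProduct_sub, dotProduct_add,
        dotProduct_smul, smul_eq_mul]
      rw [hskew, hS, hN]
      ring
    rw [hval]
    have hδ' : -δ = ω⁻¹ * ((ω - 2) * m - 2 * θ) := by
      rw [hδ]; field_simp; ring
    rw [hδ']
    have h1 : 0 ≤ ω⁻¹ * (2 - ω) :=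
      mul_nonneg (inv_nonneg.mpr hω0.le) (by linarith)
    have h2 : 0 ≤ (∑ i, A i i * df i ^ 2) - m * (df ⬝ᵥ df) := by linarith
    nlinarith [mul_nonneg h1 h2]
  -- put it together
  rw [hfz, hfx, hnorm]
  have hvd : vf ⬝ᵥ df = -((B.mulVec zf + bf + C.mulVec xf) ⬝ᵥ df) := by
    rw [hv, neg_dotProduct]
  have final : (1/2) * (df ⬝ᵥ (C - B).mulVec df) ≤ -(δ/2) * (df ⬝ᵥ df) := by
    linarith [quadbound]
  linarith [hsub2, identity, final, hvd]
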